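/- If B ∈ M_d(ℂ) is positive semidefinite with factor width at most k (i.e., B = Σ_n |b_n⟩⟨b_n| with each b_n having at most k nonzero coordinates), then the matrix M_{k-1}(B), with diagonal entries (k−1)|B_{ii}| and off-diagonal entries −|B_{ij}|, is positive semidefinite. -/

import Mathlib

open Matrix Finset
open scoped ComplexOrder

/-- If `B` is PSD with factor width at most `k`, then `M_{k-1}(B)` (diagonal
entries `(k-1)|B_{ii}|`, off-diagonal entries `-|B_{ij}|`) is positive semidefinite. -/
theorem comparison_M_k_sub_one_posSemidef_of_factor_width {d k : ℕ}
    (B : Matrix (Fin d) (Fin d) ℂ) (hB : B.PosSemidef)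
    (N : ℕ) (b : Fin N → Fin d → ℂ)
    (hsupp : ∀ n, (univ.filter (fun i => b n i ≠ 0)).card ≤ k)
    (hdec : B = ∑ n, vecMulVec (b n) (star (b n))) :
    (Matrix.of fun i j =>
      if i = j then ((k : ℝ) - 1) * ‖B i i‖ else -‖B i j‖ :
      Matrix (Fin d) (Fin d) ℝ).PosSemidef := by
  classical
  set c : Fin N → Fin d → ℝ := fun n i => ‖b n i‖ with hc
  have hBij : ∀ i j, B i j = ∑ n, b n i * (starRingEnd ℂ) (b n j) := by
    intro i j
    rw [hdec]
    simp [Matrix.sum_apply, vecMulVec_apply, Complex.star_def]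
  have hsym : ∀ i j, ‖B i j‖ = ‖B j i‖ := by
    intro i j
    have h : B j i = (starRingEnd ℂ) (B i j) := by
      conv_lhs => rw [← hB.1]
      rfl
    rw [h, Complex.norm_conj]
  have hdiag : ∀ i, ‖B i i‖ = ∑ n, (c n i) ^ 2 := by
    intro i
    have h : B i i = ((∑ n, (c n i) ^ 2 : ℝ) : ℂ) := by
      rw [hBij]
      push_cast
      refine Finset.sum_congr rfl fun n _ => ?_
      rw [Complex.mul_conj, ← Complex.sq_norm]
      push_cast; rfl
    rw [h, Complex.norm_real, Real.norm_eq_abs, abs_of_nonneg]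
    positivity
  have hoff : ∀ i j, ‖B i j‖ ≤ ∑ n, c n i * c n j := by
    intro i j
    rw [hBij]
    refine le_trans (norm_sum_le _ _) (le_of_eq ?_)
    refine Finset.sum_congr rfl fun n _ => ?_
    rw [norm_mul, Complex.norm_conj]
  rw [posSemidef_iff_dotProduct_mulVec]
  constructor
  · ext i j
    simp only [conjTranspose_apply, Matrix.of_apply, star_trivial]
    by_cases h : i = j
    · subst h; simp
    · have h' : ¬ j = i := fun e => h e.symm
      simp [h, h', hsym i j]
  · intro x
    rw [star_trivial]
    set M : Matrix (Fin d) (Fin d) ℝ := (Matrix.of fun i j =>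
      if i = j then ((k : ℝ) - 1) * ‖B i i‖ else -‖B i j‖) with hM
    have hterm : ∀ i j, x i * (M i j * x j) =
        (if j = i then (k : ℝ) * (‖B i i‖ * x i ^ 2) else 0)
          - ‖B i j‖ * (x i * x j) := by
      intro i j
      by_cases h : j = i
      · subst h
        have hMij : M j j = ((k : ℝ) - 1) * ‖B j j‖ := by simp [hM]
        rw [hMij, if_pos rfl]; ring
      · have h' : ¬ i = j := fun e => h e.symm
        simp only [hM, Matrix.of_apply, if_neg h, if_neg h']; ring
    have expand : x ⬝ᵥ (M *ᵥ x) =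
        (∑ i, (k : ℝ) * (‖B i i‖ * x i ^ 2))
          - ∑ i, ∑ j, ‖B i j‖ * (x i * x j) := by
      simp only [dotProduct, mulVec, Finset.mul_sum]
      rw [← Finset.sum_sub_distrib]
      refine Finset.sum_congr rfl fun i _ => ?_
      calc ∑ j, x i * (M i j * x j)
          = ∑ j, ((if j = i then (k : ℝ) * (‖B i i‖ * x i ^ 2) else 0)
            - ‖B i j‖ * (x i * x j)) :=
            Finset.sum_congr rfl fun j _ => hterm i j
        _ = _ := by
            rw [Finset.sum_sub_distrib, Finset.sum_ite_eq' univ i, if_pos (mem_univ i)]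
    rw [expand]
    -- step 1 : bound the double sum
    have h1 : ∑ i, ∑ j, ‖B i j‖ * (x i * x j)
        ≤ ∑ n, (∑ i, c n i * |x i|) ^ 2 := by
      calc ∑ i, ∑ j, ‖B i j‖ * (x i * x j)
          ≤ ∑ i, ∑ j, (∑ n, c n i * c n j) * (|x i| * |x j|) := by
            refine Finset.sum_le_sum fun i _ => Finset.sum_le_sum fun j _ => ?_
            have h1 : ‖B i j‖ * (x i * x j)
                ≤ ‖B i j‖ * (|x i| * |x j|) := by
              rw [← abs_mul]
              exact mul_le_mul_of_nonneg_left (le_abs_self _) (norm_nonneg _)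
            refine h1.trans (mul_le_mul_of_nonneg_right (hoff i j) ?_)
            positivity
        _ = ∑ i, ∑ j, ∑ n, (c n i * |x i|) * (c n j * |x j|) := by
            refine Finset.sum_congr rfl fun i _ => Finset.sum_congr rfl fun j _ => ?_
            rw [Finset.sum_mul]
            exact Finset.sum_congr rfl fun n _ => by ring
        _ = ∑ i, ∑ n, ∑ j, (c n i * |x i|) * (c n j * |x j|) :=
            Finset.sum_congr rfl fun i _ => Finset.sum_comm
        _ = ∑ n, ∑ i, ∑ j, (c n i * |x i|) * (c n j * |x j|) := Finset.sum_comm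
        _ = ∑ n, (∑ i, c n i * |x i|) ^ 2 := by
            refine Finset.sum_congr rfl fun n _ => ?_
            rw [sq, Finset.sum_mul_sum]
    -- step 2 : rewrite the diagonal part
    have h2 : (∑ i, (k : ℝ) * (‖B i i‖ * x i ^ 2))
        = ∑ n, (k : ℝ) * ∑ i, (c n i * |x i|) ^ 2 := by
      simp only [hdiag, Finset.sum_mul, Finset.mul_sum, mul_pow, sq_abs]
      rw [Finset.sum_comm]
    -- step 3 : per-factor Cauchy-Schwarz
    have h3 : ∀ n, (∑ i, c n i * |x i|) ^ 2 ≤ (k : ℝ) * ∑ i, (c n i * |x i|) ^ 2 := by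
      intro n
      set s := univ.filter (fun i => b n i ≠ 0) with hs
      have hz : ∀ i ∈ univ, i ∉ s → c n i * |x i| = 0 := by
        intro i _ hi
        have : b n i = 0 := by
          by_contra h
          exact hi (Finset.mem_filter.mpr ⟨Finset.mem_univ i, h⟩)
        simp [hc, this]
      have e1 : ∑ i ∈ s, c n i * |x i| = ∑ i, c n i * |x i| :=
        Finset.sum_subset (Finset.subset_univ s) (fun i hi hni => hz i hi hni)
      have e2 : ∑ i ∈ s, (c n i * |x i|) ^ 2 = ∑ i, (c n i * |x i|) ^ 2 :=
        Finset.sum_subset (Finset.subset_univ s) (fun i hi hni => by rw [hz i hi hni]; ring)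
      rw [← e1, ← e2]
      refine le_trans sq_sum_le_card_mul_sum_sq ?_
      refine mul_le_mul_of_nonneg_right ?_ (by positivity)
      exact_mod_cast hsupp n
    have h4 : ∑ n, (∑ i, c n i * |x i|) ^ 2 ≤ ∑ n, (k : ℝ) * ∑ i, (c n i * |x i|) ^ 2 :=
      Finset.sum_le_sum fun n _ => h3 n
    rw [h2]
    linarith [h1, h4]
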